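/- Let p and q be primes with p ≡ q ≡ 1 (mod 8), p = a² + b² and q = c² + d² with b, d even, and let σ = a+bi, τ = c+di ∈ ℤ[i]. Then the quadratic residue symbol [σ/τ] in ℤ[i] is independent of the choices: [σ/τ] = [σ̄/τ] = [σ/τ̄] = [σ̄/τ̄]. -/

import Mathlib

open Classical in
/-- The quadratic residue symbol `[α/π]`: `1` if `α` is a square modulo `π`, `-1` otherwise. -/
noncomputable def qr {R : Type*} [CommRing R] (α π : R) : ℤ :=
  if ∃ τ : R, π ∣ α - τ ^ 2 then 1 else -1

open Zsqrtd

/-- Transfer a square mod `τ` through multiplication. -/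
lemma qr_aux (τ α β x : GaussianInt) (hτ : Prime τ) (hα : ¬ τ ∣ α)
    (hx : τ ∣ α * β - x ^ 2) (h : ∃ y, τ ∣ α - y ^ 2) : ∃ z, τ ∣ β - z ^ 2 := by
  obtain ⟨y, hy⟩ := h
  haveI : (Ideal.span {τ} : Ideal GaussianInt).IsMaximal :=
    PrincipalIdealRing.isMaximal_of_irreducible hτ.irreducible
  letI : Field (GaussianInt ⧸ (Ideal.span {τ} : Ideal GaussianInt)) :=
    Ideal.Quotient.field _
  set f := Ideal.Quotient.mk (Ideal.span {τ} : Ideal GaussianInt) with hf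
  have hdvd : ∀ w : GaussianInt, τ ∣ w ↔ f w = 0 := fun w =>
    (Ideal.Quotient.eq_zero_iff_dvd τ w).symm
  have hα0 : f α ≠ 0 := fun h0 => hα ((hdvd α).2 h0)
  have hy0 : f y ≠ 0 := by
    intro h0
    apply hα0
    have := (hdvd _).1 hy
    rw [map_sub, map_pow, h0, sub_eq_zero] at this
    simpa using this
  have hαy : f α = f y ^ 2 := by
    have := (hdvd _).1 hy
    rwa [map_sub, map_pow, sub_eq_zero] at this
  have hαβ : f α * f β = f x ^ 2 := by
    have := (hdvd _).1 hx
    rw [map_sub, map_pow, map_mul, sub_eq_zero] at this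
    exact this
  obtain ⟨z, hz⟩ := Ideal.Quotient.mk_surjective (I := (Ideal.span {τ} : Ideal GaussianInt))
    (f x * (f y)⁻¹)
  refine ⟨z, (hdvd _).2 ?_⟩
  rw [map_sub, map_pow, hz, mul_pow, ← hαβ, hαy, inv_pow]
  field_simp [hy0]
  ring

/-- `qr` is invariant under simultaneous conjugation. -/
lemma qr_star (σ τ : GaussianInt) : qr σ τ = qr (star σ) (star τ) := by
  unfold qr
  congr 1
  apply propext
  constructor
  · rintro ⟨y, hk⟩
    refine ⟨star y, ?_⟩
    have : star τ ∣ star (σ - y ^ 2) := map_dvd (starRingEnd GaussianInt) hk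
    simpa [star_sub, star_pow] using this
  · rintro ⟨y, hk⟩
    refine ⟨star y, ?_⟩
    have : star (star τ) ∣ star (star σ - y ^ 2) := map_dvd (starRingEnd GaussianInt) hk
    simpa [star_sub, star_pow] using this

theorem stmt18 (p q : ℕ) (hp : p.Prime) (hq : q.Prime) (hp8 : p % 8 = 1) (hq8 : q % 8 = 1)
    (hpq : p ≠ q) (a b c d : ℤ) (hb : Even b) (hd : Even d)
    (hP : a ^ 2 + b ^ 2 = (p : ℤ)) (hQ : c ^ 2 + d ^ 2 = (q : ℤ))
    (hleg : jacobiSym p q = 1) :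
    qr (⟨a, b⟩ : Zsqrtd (-1)) (⟨c, d⟩ : Zsqrtd (-1)) =
        qr (star (⟨a, b⟩ : Zsqrtd (-1))) (⟨c, d⟩ : Zsqrtd (-1)) ∧
      qr (⟨a, b⟩ : Zsqrtd (-1)) (⟨c, d⟩ : Zsqrtd (-1)) =
        qr (⟨a, b⟩ : Zsqrtd (-1)) (star (⟨c, d⟩ : Zsqrtd (-1))) ∧
      qr (⟨a, b⟩ : Zsqrtd (-1)) (⟨c, d⟩ : Zsqrtd (-1)) =
        qr (star (⟨a, b⟩ : Zsqrtd (-1))) (star (⟨c, d⟩ : Zsqrtd (-1))) := by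
  set σ : GaussianInt := ⟨a, b⟩ with hσdef
  set τ : GaussianInt := ⟨c, d⟩ with hτdef
  haveI : Fact q.Prime := ⟨hq⟩
  -- norms
  have hnσ : Zsqrtd.norm σ = (p : ℤ) := by
    simp [Zsqrtd.norm, hσdef]; linarith [hP]
  have hnτ : Zsqrtd.norm τ = (q : ℤ) := by
    simp [Zsqrtd.norm, hτdef]; linarith [hQ]
  -- τ is prime
  have hτirr : Irreducible τ := by
    constructor
    · intro hu
      have := Zsqrtd.norm_eq_one_iff.2 hu
      rw [hnτ] at this
      simp only [Int.natAbs_natCast] at this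
      exact hq.one_lt.ne' this
    · intro u v huv
      have hnm : (q : ℤ) = Zsqrtd.norm u * Zsqrtd.norm v := by
        rw [← hnτ, huv, Zsqrtd.norm_mul]
      have h1 : u.norm.natAbs * v.norm.natAbs = q := by
        have := congrArg Int.natAbs hnm
        simpa [Int.natAbs_mul] using this.symm
      rcases (hq.eq_one_or_self_of_dvd u.norm.natAbs ⟨_, h1.symm⟩) with h | h
      · exact Or.inl (Zsqrtd.norm_eq_one_iff.1 h)
      · right
        apply Zsqrtd.norm_eq_one_iff.1
        rw [h] at h1
        exact Nat.eq_of_mul_eq_mul_left hq.pos (h1.trans (mul_one q).symm)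
  have hτprime : Prime τ := hτirr.prime
  -- τ does not divide σ nor star σ
  have hnd : ∀ w : GaussianInt, Zsqrtd.norm w = (p : ℤ) → ¬ τ ∣ w := by
    rintro w hw ⟨k, hk⟩
    have : (p : ℤ) = (q : ℤ) * Zsqrtd.norm k := by rw [← hw, hk, Zsqrtd.norm_mul, hnτ]
    have hdvd : (q : ℤ) ∣ (p : ℤ) := ⟨_, this⟩
    have : q ∣ p := Int.ofNat_dvd.1 hdvd
    exact hpq ((Nat.prime_dvd_prime_iff_eq hq hp).1 this).symm
  have hσnd : ¬ τ ∣ σ := hnd σ hnσ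
  have hσnd' : ¬ τ ∣ star σ := hnd (star σ) (by rw [Zsqrtd.norm_conj, hnσ])
  -- p is a square mod τ
  have hpsq : ∃ x : GaussianInt, τ ∣ σ * star σ - x ^ 2 := by
    have hleg' : legendreSym q (p : ℤ) = 1 := by
      rw [jacobiSym.legendreSym.to_jacobiSym]; exact_mod_cast hleg
    have hne : ((p : ℤ) : ZMod q) ≠ 0 := by
      rw [Int.cast_natCast, Ne, ZMod.natCast_eq_zero_iff]
      intro h
      exact hpq ((Nat.prime_dvd_prime_iff_eq hq hp).1 h).symm
    have hsq : IsSquare ((p : ℤ) : ZMod q) := (legendreSym.eq_one_iff q hne).1 hleg'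
    obtain ⟨r, hr⟩ := hsq
    obtain ⟨x, hx⟩ : ∃ x : ℤ, ((p - x ^ 2 : ℤ) : ZMod q) = 0 := by
      refine ⟨(r.val : ℤ), ?_⟩
      have hrv : ((r.val : ℕ) : ZMod q) = r := by
        rw [ZMod.natCast_val, ZMod.cast_id]
      push_cast
      rw [hrv, sub_eq_zero]
      have : ((p : ℤ) : ZMod q) = r * r := hr
      rw [Int.cast_natCast] at this
      rw [this]; ring
    have hq_dvd : (q : ℤ) ∣ (p - x ^ 2 : ℤ) := by
      rwa [← ZMod.intCast_zmod_eq_zero_iff_dvd]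
    have hτq : τ ∣ ((q : ℤ) : GaussianInt) := by
      have : ((Zsqrtd.norm τ : ℤ) : GaussianInt) = τ * star τ := Zsqrtd.norm_eq_mul_conj τ
      rw [hnτ] at this
      exact ⟨star τ, this⟩
    refine ⟨(x : GaussianInt), dvd_trans hτq ?_⟩
    have hcast : (((p - x ^ 2 : ℤ)) : GaussianInt) = σ * star σ - (x : GaussianInt) ^ 2 := by
      have hmc : ((Zsqrtd.norm σ : ℤ) : GaussianInt) = σ * star σ := Zsqrtd.norm_eq_mul_conj σ
      rw [hnσ] at hmc
      push_cast
      rw [← hmc]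
      push_cast
      ring
    rw [← hcast]
    exact map_dvd (Int.castRingHom GaussianInt) hq_dvd
  obtain ⟨x, hx⟩ := hpsq
  -- main iff
  have hmain : (∃ y, τ ∣ σ - y ^ 2) ↔ (∃ y, τ ∣ star σ - y ^ 2) := by
    constructor
    · exact qr_aux τ σ (star σ) x hτprime hσnd hx
    · intro h
      apply qr_aux τ (star σ) σ x hτprime hσnd'
      · rw [mul_comm] at hx; exact hx
      · exact h
  have eq1 : qr σ τ = qr (star σ) τ := by
    unfold qr
    rw [propext hmain]
  have eq3 : qr σ τ = qr (star σ) (star τ) := qr_star σ τ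
  have eq2 : qr σ τ = qr σ (star τ) := by
    rw [eq1, qr_star (star σ) τ, star_star]
  exact ⟨eq1, eq2, eq3⟩
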